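/- arXiv:2503.06426 — 2 statements merged into one kernel-verified Lean document; each statement's English description precedes it below -/
import Mathlib

section
/- (One-step local drift bound, Eq. (23) of the paper.) Let E be a finite-dimensional real inner product space, let f_1, …, f_N : E → ℝ be differentiable with L-Lipschitz gradients, and let f = (1/N)Σ_{i=1}^N f_i satisfy ‖∇f_i(w) − ∇f(w)‖² ≤ σ_g² for all i and all w ∈ E. Fix an anchor point w_t ∈ E, an integer K ≥ 2, and a step size ζ > 0 with 1/(2K−1) + 6Kζ²L² ≤ 1/(K−1). On a probability space, let w be a square-integrable E-valued random vector (the current local iterate of client i) and let g be a square-integrable E-valued random vector (the stochastic gradient) such that, conditionally on the σ-algebra generated by w, E[g | w] = ∇f_i(w) and E[‖g − ∇f_i(w)‖² | w] ≤ σ_l². Then the next iterate w⁺ = w − ζ g satisfies E‖w⁺ − w_t‖² ≤ (1 + 1/(K−1)) E‖w − w_t‖² + ζ²σ_l² + 6Kζ²σ_g² + 6Kζ²‖∇f(w_t)‖². -/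
open MeasureTheory
open scoped Gradient RealInnerProductSpace

private lemma integrable_inner_of_memL2' {Ω : Type*} {m0 : MeasurableSpace Ω} {μ : Measure Ω}
    {V : Type*} [NormedAddCommGroup V] [InnerProductSpace ℝ V]
    {f g : Ω → V} (hf : MemLp f 2 μ) (hg : MemLp g 2 μ) :
    Integrable (fun ω => ⟪f ω, g ω⟫) μ := by
  have h := MeasureTheory.L2.integrable_inner (𝕜 := ℝ) (hf.toLp f) (hg.toLp g)
  refine h.congr ?_
  filter_upwards [hf.coeFn_toLp, hg.coeFn_toLp] with ω h1 h2
  rw [h1, h2]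

private lemma integrable_mul_of_memL2' {Ω : Type*} {m0 : MeasurableSpace Ω} {μ : Measure Ω}
    {f g : Ω → ℝ} (hf : MemLp f 2 μ) (hg : MemLp g 2 μ) :
    Integrable (fun ω => f ω * g ω) μ := by
  have h := integrable_inner_of_memL2' hf hg
  simpa [RCLike.inner_apply, mul_comm] using h

set_option maxHeartbeats 1000000

/-- One-step local drift bound (Eq. (23) of the paper): one local SGD step of client `i`
drifts from the anchor `w_t` by at most
`(1 + 1/(K−1)) E‖w − w_t‖² + ζ²σ_l² + 6Kζ²σ_g² + 6Kζ²‖∇f(w_t)‖²`,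
where the stochastic gradient `g` is conditionally unbiased, given the σ-algebra generated
by the current iterate `w`, with conditional variance at most `σ_l²`. -/
theorem stmt7 {V : Type*} [NormedAddCommGroup V] [InnerProductSpace ℝ V]
    [FiniteDimensional ℝ V] [MeasurableSpace V] [BorelSpace V]
    {Ω : Type*} {m0 : MeasurableSpace Ω} (μ : Measure Ω) [IsProbabilityMeasure μ]
    (N : ℕ) (f : Fin N → V → ℝ) (F : V → ℝ) (L σl σg : ℝ)
    (hdiff : ∀ i, Differentiable ℝ (f i))
    (hLip : ∀ i, ∀ x y : V, ‖∇ (f i) x - ∇ (f i) y‖ ≤ L * ‖x - y‖)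
    (hF : F = fun x => (1 / (N : ℝ)) * ∑ i : Fin N, f i x)
    (hdev : ∀ i, ∀ x : V, ‖∇ (f i) x - ∇ F x‖ ^ 2 ≤ σg ^ 2)
    (wt : V) (K : ℕ) (hK : 2 ≤ K) (ζ : ℝ) (hζ : 0 < ζ)
    (hstep : 1 / (2 * (K : ℝ) - 1) + 6 * (K : ℝ) * ζ ^ 2 * L ^ 2 ≤ 1 / ((K : ℝ) - 1))
    (i : Fin N) (w g : Ω → V)
    (hwL2 : MemLp w 2 μ) (hgL2 : MemLp g 2 μ) (hw_meas : Measurable w)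
    (hunbiased : μ[g | MeasurableSpace.comap w ‹MeasurableSpace V›]
      =ᵐ[μ] fun ω => ∇ (f i) (w ω))
    (hvar : μ[(fun ω => ‖g ω - ∇ (f i) (w ω)‖ ^ 2) | MeasurableSpace.comap w ‹MeasurableSpace V›]
      ≤ᵐ[μ] fun _ => σl ^ 2) :
    ∫ ω, ‖(w ω - ζ • g ω) - wt‖ ^ 2 ∂μ
      ≤ (1 + 1 / ((K : ℝ) - 1)) * ∫ ω, ‖w ω - wt‖ ^ 2 ∂μ
        + ζ ^ 2 * σl ^ 2 + 6 * (K : ℝ) * ζ ^ 2 * σg ^ 2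
        + 6 * (K : ℝ) * ζ ^ 2 * ‖∇ F wt‖ ^ 2 := by
  classical
  set m : MeasurableSpace Ω := MeasurableSpace.comap w ‹MeasurableSpace V› with hm_def
  have hm : m ≤ m0 := hw_meas.comap_le
  haveI : SigmaFinite (μ.trim hm) := inferInstance
  letI : MeasurableSpace Ω := m0
  -- numeric facts
  have hKR : (2:ℝ) ≤ (K:ℝ) := by exact_mod_cast hK
  have h2K1 : (0:ℝ) < 2*(K:ℝ)-1 := by linarith
  -- continuity of the gradient
  have cont : Continuous (∇ (f i)) := by
    have : LipschitzWith ⟨max L 0, le_max_right _ _⟩ (∇ (f i)) := by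
      refine LipschitzWith.of_dist_le_mul fun x y => ?_
      rw [dist_eq_norm, dist_eq_norm]
      calc ‖∇ (f i) x - ∇ (f i) y‖ ≤ L * ‖x - y‖ := hLip i x y
        _ ≤ max L 0 * ‖x - y‖ :=
          mul_le_mul_of_nonneg_right (le_max_left _ _) (norm_nonneg _)
    exact this.continuous
  set G : Ω → V := fun ω => ∇ (f i) (w ω) with hG_def
  set D : Ω → V := fun ω => g ω - G ω with hD_def
  set X : Ω → V := fun ω => (w ω - wt) - ζ • G ω with hX_def
  -- measurability
  have hwm : Measurable[m] w := Measurable.of_comap_le le_rfl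
  have hGmm : Measurable[m] G := cont.measurable.comp hwm
  have hGaesm : AEStronglyMeasurable G μ :=
    cont.comp_aestronglyMeasurable hwL2.aestronglyMeasurable
  have hXm : Measurable[m] X :=
    Measurable.sub (m := m) (Measurable.sub (m := m) hwm measurable_const)
      (Measurable.const_smul (m := m) hGmm ζ)
  -- L² bounds
  have hwwt : MemLp (fun ω => w ω - wt) 2 μ := hwL2.sub (memLp_const wt)
  have hGL2 : MemLp G 2 μ := by
    have hb : MemLp (fun ω => |L| * ‖w ω - wt‖ + ‖∇ (f i) wt‖) 2 μ :=
      (hwwt.norm.const_mul |L|).add (memLp_const _)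
    refine MemLp.of_le hb hGaesm (Filter.Eventually.of_forall fun ω => ?_)
    have h1 : ‖G ω - ∇ (f i) wt‖ ≤ L * ‖w ω - wt‖ := hLip i (w ω) wt
    have h2 : ‖G ω‖ ≤ ‖G ω - ∇ (f i) wt‖ + ‖∇ (f i) wt‖ := by
      calc ‖G ω‖ = ‖(G ω - ∇ (f i) wt) + ∇ (f i) wt‖ := by
            rw [show (G ω - ∇ (f i) wt) + ∇ (f i) wt = G ω from by abel]
        _ ≤ _ := norm_add_le _ _
    have h3 : L * ‖w ω - wt‖ ≤ |L| * ‖w ω - wt‖ :=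
      mul_le_mul_of_nonneg_right (le_abs_self L) (norm_nonneg _)
    have h4 : (0:ℝ) ≤ |L| * ‖w ω - wt‖ + ‖∇ (f i) wt‖ := by positivity
    rw [Real.norm_eq_abs, abs_of_nonneg h4]
    linarith
  have hDL2 : MemLp D 2 μ := hgL2.sub hGL2
  have hXL2 : MemLp X 2 μ := hwwt.sub (hGL2.const_smul ζ)
  have hgint : Integrable g μ := hgL2.integrable one_le_two
  have hGint : Integrable G μ := hGL2.integrable one_le_two
  have hDint : Integrable D μ := hDL2.integrable one_le_two
  -- square-integrability of norms
  have hwwt2int : Integrable (fun ω => ‖w ω - wt‖^2) μ := hwwt.norm.integrable_sq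
  have hG2int : Integrable (fun ω => ‖G ω‖^2) μ := hGL2.norm.integrable_sq
  have hD2int : Integrable (fun ω => ‖D ω‖^2) μ := hDL2.norm.integrable_sq
  have hX2int : Integrable (fun ω => ‖X ω‖^2) μ := hXL2.norm.integrable_sq
  have hinner_int : Integrable (fun ω => ⟪X ω, D ω⟫) μ := integrable_inner_of_memL2' hXL2 hDL2
  set A := ∫ ω, ‖w ω - wt‖^2 ∂μ with hA_def
  have hA0 : 0 ≤ A := integral_nonneg fun ω => sq_nonneg _
  -- conditional expectation of D is zero
  have hcondG : μ[G|m] = G :=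
    condExp_of_stronglyMeasurable hm hGmm.stronglyMeasurable hGint
  have hD0 : μ[D|m] =ᵐ[μ] 0 := by
    have h1 : μ[D|m] =ᵐ[μ] μ[g|m] - μ[G|m] := condExp_sub hgint hGint m
    refine h1.trans ?_
    rw [hcondG]
    filter_upwards [hunbiased] with ω hω
    simp only [Pi.sub_apply, Pi.zero_apply, hω, hG_def, sub_self]
  -- cross term vanishes
  have b := stdOrthonormalBasis ℝ V
  have key : ∀ j, ∫ ω, ⟪b j, X ω⟫ * ⟪b j, D ω⟫ ∂μ = 0 := by
    intro j
    have hXjL2 : MemLp (fun ω => ⟪b j, X ω⟫) 2 μ := hXL2.const_inner (b j)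
    have hDjL2 : MemLp (fun ω => ⟪b j, D ω⟫) 2 μ := hDL2.const_inner (b j)
    have hDjint : Integrable (fun ω => ⟪b j, D ω⟫) μ := hDjL2.integrable one_le_two
    have hmulint : Integrable (fun ω => ⟪b j, X ω⟫ * ⟪b j, D ω⟫) μ :=
      integrable_mul_of_memL2' hXjL2 hDjL2
    have hXjsm : StronglyMeasurable[m] (fun ω => ⟪b j, X ω⟫) := by
      have h : Measurable[m] (fun ω => ⟪b j, X ω⟫) := by
        exact measurable_const.inner hXm
      exact h.stronglyMeasurable
    have hDj0 : (fun _ => (0:ℝ)) =ᵐ[μ] μ[(fun ω => ⟪b j, D ω⟫)|m] := by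
      refine ae_eq_condExp_of_forall_setIntegral_eq hm hDjint
        (fun s _ _ => (integrable_zero _ _ _).integrableOn) (fun s hs hμs => ?_)
        ⟨fun _ => 0, stronglyMeasurable_const, Filter.EventuallyEq.rfl⟩
      have hDs : ∫ x in s, D x ∂μ = 0 := by
        rw [← setIntegral_condExp hm hDint hs]
        have h0 : ∫ x in s, (μ[D|m]) x ∂μ = ∫ x in s, (0:Ω→V) x ∂μ :=
          setIntegral_congr_ae (hm s hs) (hD0.mono fun x hx _ => hx)
        simpa using h0
      have := (innerSL ℝ (b j)).integral_comp_comm hDint.integrableOn (μ := μ.restrict s)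
      simp only [innerSL_apply_apply] at this
      rw [integral_zero, this, hDs]
      simp
    have hpull := condExp_mul_of_stronglyMeasurable_left hXjsm hmulint hDjint
    have h1 : ∫ ω, (μ[(fun ω => ⟪b j, X ω⟫) * (fun ω => ⟪b j, D ω⟫)|m]) ω ∂μ
        = ∫ ω, ((fun ω => ⟪b j, X ω⟫) * (fun ω => ⟪b j, D ω⟫)) ω ∂μ := integral_condExp hm
    simp only [Pi.mul_apply] at h1
    rw [← h1]
    refine integral_eq_zero_of_ae ?_
    filter_upwards [hpull, hDj0] with ω hω1 hω2
    rw [Pi.zero_apply, hω1, Pi.mul_apply, ← hω2]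
    simp
  have hcross : ∫ ω, ⟪X ω, D ω⟫ ∂μ = 0 := by
    have hrw : ∀ ω, ⟪X ω, D ω⟫ = ∑ j, ⟪b j, X ω⟫ * ⟪b j, D ω⟫ := by
      intro ω
      rw [← b.sum_inner_mul_inner (X ω) (D ω)]
      refine Finset.sum_congr rfl fun j _ => ?_
      rw [real_inner_comm (X ω) (b j)]
    simp_rw [hrw]
    rw [integral_finset_sum]
    · exact Finset.sum_eq_zero fun j _ => key j
    · exact fun j _ => integrable_mul_of_memL2' (hXL2.const_inner (b j)) (hDL2.const_inner (b j))
  -- variance bound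
  have hD2 : ∫ ω, ‖D ω‖^2 ∂μ ≤ σl^2 := by
    have h1 : ∫ ω, ‖D ω‖^2 ∂μ = ∫ ω, (μ[(fun ω => ‖D ω‖^2)|m]) ω ∂μ :=
      (integral_condExp hm).symm
    have h2 : ∫ ω, (μ[(fun ω => ‖D ω‖^2)|m]) ω ∂μ ≤ ∫ _, σl^2 ∂μ :=
      integral_mono_ae integrable_condExp (integrable_const _) hvar
    rw [h1]
    simpa using h2
  -- pointwise bound on ‖G‖²
  have hptG : ∀ ω, ‖G ω‖^2 ≤ 3*L^2*‖w ω - wt‖^2 + (3*σg^2 + 3*‖∇ F wt‖^2) := by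
    intro ω
    have h1 : ‖G ω - ∇ (f i) wt‖ ≤ L * ‖w ω - wt‖ := hLip i (w ω) wt
    have h2 : ‖∇ (f i) wt - ∇ F wt‖^2 ≤ σg^2 := hdev i wt
    have h3 : ‖G ω‖ ≤ ‖G ω - ∇ (f i) wt‖ + ‖∇ (f i) wt - ∇ F wt‖ + ‖∇ F wt‖ := by
      calc ‖G ω‖ = ‖(G ω - ∇ (f i) wt) + (∇ (f i) wt - ∇ F wt) + ∇ F wt‖ := by
            rw [show (G ω - ∇ (f i) wt) + (∇ (f i) wt - ∇ F wt) + ∇ F wt = G ω from by abel]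
        _ ≤ _ := norm_add₃_le
    have h4 := pow_le_pow_left₀ (norm_nonneg (G ω)) h3 2
    have h5 := pow_le_pow_left₀ (norm_nonneg (G ω - ∇ (f i) wt)) h1 2
    nlinarith [norm_nonneg (G ω - ∇ (f i) wt), norm_nonneg (∇ (f i) wt - ∇ F wt),
      norm_nonneg (∇ F wt),
      sq_nonneg (‖G ω - ∇ (f i) wt‖ - ‖∇ (f i) wt - ∇ F wt‖),
      sq_nonneg (‖G ω - ∇ (f i) wt‖ - ‖∇ F wt‖),
      sq_nonneg (‖∇ (f i) wt - ∇ F wt‖ - ‖∇ F wt‖)]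
  have hG2 : ∫ ω, ‖G ω‖^2 ∂μ ≤ 3*L^2*A + (3*σg^2 + 3*‖∇ F wt‖^2) := by
    have hsum : Integrable (fun ω => 3*L^2*‖w ω - wt‖^2 + (3*σg^2 + 3*‖∇ F wt‖^2)) μ := by
      exact (hwwt2int.const_mul (3*L^2)).add (integrable_const _)
    have h := integral_mono hG2int hsum hptG
    rw [integral_add (hwwt2int.const_mul (3*L^2)) (integrable_const _),
      integral_const_mul, integral_const, probReal_univ, one_smul] at h
    exact h
  -- pointwise Young bound on ‖X‖²
  have hptX : ∀ ω, ‖X ω‖^2 ≤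
      (1 + 1/(2*(K:ℝ)-1)) * ‖w ω - wt‖^2 + 2*(K:ℝ)*ζ^2*‖G ω‖^2 := by
    intro ω
    have h3 : ‖X ω‖ ≤ ‖w ω - wt‖ + ζ*‖G ω‖ := by
      calc ‖X ω‖ ≤ ‖w ω - wt‖ + ‖ζ • G ω‖ := norm_sub_le _ _
        _ = ‖w ω - wt‖ + ζ*‖G ω‖ := by
            rw [norm_smul, Real.norm_eq_abs, abs_of_pos hζ]
    have h4 := pow_le_pow_left₀ (norm_nonneg (X ω)) h3 2
    have hinv : (2*(K:ℝ)-1) * (1/(2*(K:ℝ)-1)) = 1 := by field_simp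
    have key2 : (‖w ω - wt‖ + ζ*‖G ω‖)^2 ≤
        (1 + 1/(2*(K:ℝ)-1)) * ‖w ω - wt‖^2 + (2*(K:ℝ)) * (ζ*‖G ω‖)^2 := by
      nlinarith [sq_nonneg (‖w ω - wt‖ - (2*(K:ℝ)-1)*(ζ*‖G ω‖)), h2K1, hinv,
        mul_pos h2K1 h2K1]
    calc ‖X ω‖^2 ≤ (‖w ω - wt‖ + ζ*‖G ω‖)^2 := h4
      _ ≤ (1 + 1/(2*(K:ℝ)-1)) * ‖w ω - wt‖^2 + (2*(K:ℝ)) * (ζ*‖G ω‖)^2 := key2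
      _ = (1 + 1/(2*(K:ℝ)-1)) * ‖w ω - wt‖^2 + 2*(K:ℝ)*ζ^2*‖G ω‖^2 := by ring
  have hX2 : ∫ ω, ‖X ω‖^2 ∂μ ≤
      (1 + 1/(2*(K:ℝ)-1)) * A + 2*(K:ℝ)*ζ^2 * ∫ ω, ‖G ω‖^2 ∂μ := by
    have hsum : Integrable (fun ω =>
        (1 + 1/(2*(K:ℝ)-1)) * ‖w ω - wt‖^2 + 2*(K:ℝ)*ζ^2*‖G ω‖^2) μ := by
      exact (hwwt2int.const_mul _).add (hG2int.const_mul _)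
    have h := integral_mono hX2int hsum hptX
    rw [integral_add (hwwt2int.const_mul ((1 + 1/(2*(K:ℝ)-1)))) (hG2int.const_mul (2*(K:ℝ)*ζ^2)),
      integral_const_mul, integral_const_mul] at h
    exact h
  -- main decomposition
  have hpt_main : ∀ ω, ‖(w ω - ζ • g ω) - wt‖^2
      = ‖X ω‖^2 - 2*ζ*⟪X ω, D ω⟫ + ζ^2*‖D ω‖^2 := by
    intro ω
    have h1 : (w ω - ζ • g ω) - wt = X ω - ζ • D ω := by
      simp only [hX_def, hD_def, smul_sub]
      abel
    rw [h1, norm_sub_sq_real, real_inner_smul_right, norm_smul, Real.norm_eq_abs,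
      mul_pow, sq_abs]
    ring
  have hmain : ∫ ω, ‖(w ω - ζ • g ω) - wt‖^2 ∂μ
      = (∫ ω, ‖X ω‖^2 ∂μ) + ζ^2 * ∫ ω, ‖D ω‖^2 ∂μ := by
    simp_rw [hpt_main]
    have I1 : Integrable (fun ω => ‖X ω‖^2 - 2*ζ*⟪X ω, D ω⟫) μ := by
      exact hX2int.sub (hinner_int.const_mul (2*ζ))
    have I2 : Integrable (fun ω => ζ^2*‖D ω‖^2) μ := hD2int.const_mul _
    rw [integral_add I1 I2, integral_sub hX2int (hinner_int.const_mul (2*ζ)),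
      integral_const_mul, integral_const_mul, hcross]
    ring
  -- put it all together
  have h2K : (0:ℝ) ≤ 2*(K:ℝ)*ζ^2 := by positivity
  have hcoef : (1 + 1/(2*(K:ℝ)-1)) + 6*(K:ℝ)*ζ^2*L^2 ≤ 1 + 1/((K:ℝ)-1) := by linarith
  have hX2' : ∫ ω, ‖X ω‖^2 ∂μ ≤ (1 + 1/(2*(K:ℝ)-1)) * A
      + 2*(K:ℝ)*ζ^2 * (3*L^2*A + (3*σg^2 + 3*‖∇ F wt‖^2)) :=
    hX2.trans (add_le_add_right (mul_le_mul_of_nonneg_left hG2 h2K) _)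
  have hD2' : ζ^2 * ∫ ω, ‖D ω‖^2 ∂μ ≤ ζ^2 * σl^2 :=
    mul_le_mul_of_nonneg_left hD2 (sq_nonneg ζ)
  have hAc := mul_le_mul_of_nonneg_right hcoef hA0
  calc ∫ ω, ‖(w ω - ζ • g ω) - wt‖^2 ∂μ
      = (∫ ω, ‖X ω‖^2 ∂μ) + ζ^2 * ∫ ω, ‖D ω‖^2 ∂μ := hmain
    _ ≤ ((1 + 1/(2*(K:ℝ)-1)) * A
        + 2*(K:ℝ)*ζ^2 * (3*L^2*A + (3*σg^2 + 3*‖∇ F wt‖^2))) + ζ^2 * σl^2 :=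
        add_le_add hX2' hD2'
    _ = ((1 + 1/(2*(K:ℝ)-1)) + 6*(K:ℝ)*ζ^2*L^2) * A + ζ^2*σl^2
        + 6*(K:ℝ)*ζ^2*σg^2 + 6*(K:ℝ)*ζ^2*‖∇ F wt‖^2 := by ring
    _ ≤ (1 + 1/((K:ℝ)-1)) * A + ζ^2*σl^2
        + 6*(K:ℝ)*ζ^2*σg^2 + 6*(K:ℝ)*ζ^2*‖∇ F wt‖^2 := by linarith
end

section
/- (Server drift accumulation bound, Eq. (35) of the paper.) Let E be a finite-dimensional real inner product space and f : E → ℝ differentiable. On a probability space with a filtration (F_e)_{e≥0}, let ŵ_0 be F_0-measurable and square-integrable, and for e ≥ 0 define ŵ_{e+1} = ŵ_e − η h_e, where η > 0 and each h_e is a square-integrable E-valued random vector satisfying E[h_e | F_e] = ∇f(ŵ_e) and E[‖h_e − ∇f(ŵ_e)‖² | F_e] ≤ σ_l², with ŵ_e being F_e-measurable. Then for every integer e ≥ 0, E‖ŵ_0 − ŵ_e‖² ≤ η² e Σ_{p=0}^{e−1} E‖∇f(ŵ_p)‖² + η² e² σ_l². -/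
open MeasureTheory
open scoped Gradient RealInnerProductSpace

section Aux

variable {V : Type*} [NormedAddCommGroup V] [InnerProductSpace ℝ V] [CompleteSpace V]
  {Ω : Type*} {m m0 : MeasurableSpace Ω} {μ : Measure Ω} [IsProbabilityMeasure μ]

/-- The `L²` conditional expectation agrees a.e. with `condexp`. -/
lemma aux_condExpL2_ae_eq_condexp (hm : m ≤ m0) {h : Ω → V} (hh : MemLp h 2 μ) :
    (condExpL2 V ℝ hm (hh.toLp h) : Ω → V) =ᵐ[μ] μ[h|m] := by
  refine ae_eq_condExp_of_forall_setIntegral_eq hm (hh.integrable one_le_two) ?_ ?_ ?_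
  · intro s _ _
    exact (integrable_condExpL2_of_isFiniteMeasure hm).integrableOn
  · intro s hs _
    rw [integral_condExpL2_eq hm (hh.toLp h) hs (measure_ne_top μ s)]
    exact setIntegral_congr_ae (hm s hs) (hh.coeFn_toLp.mono fun x hx _ => hx)
  · exact aestronglyMeasurable_condExpL2 hm _

/-- Conditional expectation of an `L²` function is `L²`. -/
lemma aux_condexp_memL2 (hm : m ≤ m0) {h : Ω → V} (hh : MemLp h 2 μ) :
    MemLp (μ[h|m]) 2 μ :=
  MemLp.ae_eq (aux_condExpL2_ae_eq_condexp hm hh) (Lp.memLp _)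

lemma aux_integrable_inner {g n : Ω → V} (hg2 : MemLp g 2 μ) (hn2 : MemLp n 2 μ) :
    Integrable (fun ω => ⟪n ω, g ω⟫) μ := by
  have h := L2.integrable_inner (𝕜 := ℝ) (hn2.toLp n) (hg2.toLp g)
  refine h.congr ?_
  filter_upwards [hn2.coeFn_toLp, hg2.coeFn_toLp] with ω h1 h2
  rw [h1, h2]

/-- Orthogonality of a conditionally centered vector against an `m`-measurable one. -/
lemma aux_integral_inner_eq_zero (hm : m ≤ m0) {g n : Ω → V}
    (hgm : AEStronglyMeasurable[m] g μ) (hg2 : MemLp g 2 μ) (hn2 : MemLp n 2 μ)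
    (hzero : μ[n|m] =ᵐ[μ] fun _ => (0 : V)) :
    ∫ ω, ⟪n ω, g ω⟫ ∂μ = 0 := by
  set N := hn2.toLp n with hN
  set G := hg2.toLp g with hG
  have hGm : AEStronglyMeasurable[m] (G : Ω → V) μ := hgm.congr hg2.coeFn_toLp.symm
  have h1 : (inner (𝕜 := ℝ) ((condExpL2 V ℝ hm N : Ω →₂[μ] V)) G : ℝ)
      = inner (𝕜 := ℝ) N G :=
    inner_condExpL2_eq_inner_fun hm N G hGm
  have hN0 : (condExpL2 V ℝ hm N : Ω → V) =ᵐ[μ] fun _ => (0 : V) :=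
    (aux_condExpL2_ae_eq_condexp hm hn2).trans hzero
  have h2 : (inner (𝕜 := ℝ) ((condExpL2 V ℝ hm N : Ω →₂[μ] V)) G : ℝ) = 0 := by
    rw [L2.inner_def]
    rw [integral_congr_ae (g := fun _ => (0 : ℝ))
      (hN0.mono fun ω hω => by simp [hω])]
    simp
  have h3 : (inner (𝕜 := ℝ) N G : ℝ) = ∫ ω, ⟪n ω, g ω⟫ ∂μ := by
    rw [L2.inner_def]
    refine integral_congr_ae ?_
    filter_upwards [hn2.coeFn_toLp, hg2.coeFn_toLp] with ω ha hb
    rw [ha, hb]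
  rw [← h3, ← h1, h2]

end Aux

/-- Server drift accumulation bound (Eq. (35) of the paper): for the server-side SGD
iterates `W_{e+1} = W_e − η h_e` driven by stochastic gradients that are conditionally
unbiased for `∇f` with conditional noise second moment at most `σ_l²`,
`E‖W_0 − W_e‖² ≤ η² e Σ_{p<e} E‖∇f(W_p)‖² + η² e² σ_l²`. -/
theorem stmt8 {V : Type*} [NormedAddCommGroup V] [InnerProductSpace ℝ V]
    [FiniteDimensional ℝ V]
    {Ω : Type*} {m0 : MeasurableSpace Ω} (μ : Measure Ω) [IsProbabilityMeasure μ]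
    (f : V → ℝ) (hdiff : Differentiable ℝ f) (σl η : ℝ) (hη : 0 < η)
    (ℱ : Filtration ℕ m0)
    (W h : ℕ → Ω → V)
    (hmeas : ∀ e, StronglyMeasurable[ℱ e] (W e))
    (hWL2 : ∀ e, MemLp (W e) 2 μ) (hhL2 : ∀ e, MemLp (h e) 2 μ)
    (hrec : ∀ e, W (e + 1) = fun ω => W e ω - η • h e ω)
    (hunbiased : ∀ e, μ[h e | ℱ e] =ᵐ[μ] fun ω => ∇ f (W e ω))
    (hvar : ∀ e, μ[(fun ω => ‖h e ω - ∇ f (W e ω)‖ ^ 2) | ℱ e] ≤ᵐ[μ] fun _ => σl ^ 2) :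
    ∀ e : ℕ,
      ∫ ω, ‖W 0 ω - W e ω‖ ^ 2 ∂μ
        ≤ η ^ 2 * (e : ℝ) * ∑ p ∈ Finset.range e, ∫ ω, ‖∇ f (W p ω)‖ ^ 2 ∂μ
          + η ^ 2 * (e : ℝ) ^ 2 * σl ^ 2 := by
  intro e
  borelize V
  have hm : ∀ p, ℱ p ≤ m0 := fun p => ℱ.le p
  -- measurability of the gradient
  have hgradmeas : Measurable (∇ f) := by
    borelize (V →L[ℝ] ℝ)
    have h1 : Measurable (fderiv ℝ f) := measurable_fderiv ℝ f
    have h2 : Continuous fun L : V →L[ℝ] ℝ => (InnerProductSpace.toDual ℝ V).symm L :=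
      (InnerProductSpace.toDual ℝ V).symm.continuous
    exact h2.measurable.comp h1
  set g : ℕ → Ω → V := fun p ω => ∇ f (W p ω) with hgdef
  have hgsm : ∀ p, StronglyMeasurable[ℱ p] (g p) := fun p =>
    (hgradmeas.comp (hmeas p).measurable).stronglyMeasurable
  have hg2 : ∀ p, MemLp (g p) 2 μ := fun p =>
    MemLp.ae_eq (hunbiased p) (aux_condexp_memL2 (hm p) (hhL2 p))
  set n : ℕ → Ω → V := fun p ω => h p ω - g p ω with hndef
  have hn2 : ∀ p, MemLp (n p) 2 μ := fun p => (hhL2 p).sub (hg2 p)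
  have hzero : ∀ p, μ[n p|ℱ p] =ᵐ[μ] fun _ => (0 : V) := by
    intro p
    have h1 : μ[h p - g p|ℱ p] =ᵐ[μ] μ[h p|ℱ p] - μ[g p|ℱ p] :=
      condExp_sub ((hhL2 p).integrable one_le_two) ((hg2 p).integrable one_le_two) _
    have h2 : μ[g p|ℱ p] = g p :=
      condExp_of_stronglyMeasurable (hm p) (hgsm p) ((hg2 p).integrable one_le_two)
    have h3 : (n p : Ω → V) = h p - g p := rfl
    rw [h3]
    filter_upwards [h1, hunbiased p] with ω hω1 hω2
    simp only [hω1, Pi.sub_apply, h2]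
    rw [hω2]
    simp [hgdef]
  have hcross : ∀ p, ∫ ω, ⟪n p ω, g p ω⟫ ∂μ = 0 := fun p =>
    aux_integral_inner_eq_zero (hm p) ((hgsm p).aestronglyMeasurable) (hg2 p) (hn2 p)
      (hzero p)
  have hgsq_int : ∀ p, Integrable (fun ω => ‖g p ω‖ ^ 2) μ := fun p =>
    ((hg2 p).norm).integrable_sq
  have hnsq_int : ∀ p, Integrable (fun ω => ‖n p ω‖ ^ 2) μ := fun p =>
    ((hn2 p).norm).integrable_sq
  have hhsq_int : ∀ p, Integrable (fun ω => ‖h p ω‖ ^ 2) μ := fun p =>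
    ((hhL2 p).norm).integrable_sq
  -- conditional variance bound integrated
  have hnvar : ∀ p, ∫ ω, ‖n p ω‖ ^ 2 ∂μ ≤ σl ^ 2 := by
    intro p
    have h0 : (fun ω => ‖n p ω‖ ^ 2) = fun ω => ‖h p ω - ∇ f (W p ω)‖ ^ 2 := rfl
    calc ∫ ω, ‖n p ω‖ ^ 2 ∂μ
        = ∫ ω, (μ[fun ω => ‖n p ω‖ ^ 2|ℱ p]) ω ∂μ := (integral_condExp (hm p)).symm
      _ ≤ ∫ _, (σl ^ 2 : ℝ) ∂μ := by
          refine integral_mono_ae integrable_condExp (integrable_const _) ?_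
          rw [h0]; exact hvar p
      _ = σl ^ 2 := by simp
  -- second moment of the stochastic gradient
  have hmoment : ∀ p, ∫ ω, ‖h p ω‖ ^ 2 ∂μ ≤ ∫ ω, ‖g p ω‖ ^ 2 ∂μ + σl ^ 2 := by
    intro p
    have hcint : Integrable (fun ω => ⟪n p ω, g p ω⟫) μ :=
      aux_integrable_inner (hg2 p) (hn2 p)
    have hdecomp : (fun ω => ‖h p ω‖ ^ 2)
        = fun ω => ‖g p ω‖ ^ 2 + (2 * ⟪n p ω, g p ω⟫ + ‖n p ω‖ ^ 2) := by
      funext ω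
      have hh' : h p ω = g p ω + n p ω := by simp [hndef]
      rw [hh', norm_add_sq_real, real_inner_comm]
      ring
    have e1 : ∫ ω, ‖h p ω‖ ^ 2 ∂μ
        = ∫ ω, ‖g p ω‖ ^ 2 ∂μ
          + (∫ ω, 2 * ⟪n p ω, g p ω⟫ ∂μ + ∫ ω, ‖n p ω‖ ^ 2 ∂μ) := by
      have hadd : Integrable (fun ω => 2 * ⟪n p ω, g p ω⟫ + ‖n p ω‖ ^ 2) μ :=
        (hcint.const_mul 2).add (hnsq_int p)
      rw [hdecomp]
      rw [integral_add (hgsq_int p) hadd,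
        integral_add (hcint.const_mul 2) (hnsq_int p)]
    have e2 : ∫ ω, 2 * ⟪n p ω, g p ω⟫ ∂μ = 0 := by
      rw [integral_const_mul, hcross p, mul_zero]
    have := hnvar p
    rw [e1, e2]
    linarith
  -- telescoping identity
  have htel : ∀ k : ℕ, ∀ ω, W 0 ω - W k ω = η • ∑ p ∈ Finset.range k, h p ω := by
    intro k
    induction k with
    | zero => intro ω; simp
    | succ j ih =>
        intro ω
        rw [hrec j]
        have : W 0 ω - (W j ω - η • h j ω) = (W 0 ω - W j ω) + η • h j ω := by abel
        rw [this, ih ω, Finset.sum_range_succ, smul_add]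
  -- pointwise Cauchy-Schwarz bound
  have hpt : ∀ ω, ‖W 0 ω - W e ω‖ ^ 2
      ≤ η ^ 2 * (e : ℝ) * ∑ p ∈ Finset.range e, ‖h p ω‖ ^ 2 := by
    intro ω
    rw [htel e ω, norm_smul, mul_pow]
    have h1 : ‖∑ p ∈ Finset.range e, h p ω‖ ≤ ∑ p ∈ Finset.range e, ‖h p ω‖ :=
      norm_sum_le _ _
    have h2 : (∑ p ∈ Finset.range e, ‖h p ω‖) ^ 2
        ≤ (e : ℝ) * ∑ p ∈ Finset.range e, ‖h p ω‖ ^ 2 := by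
      have := sq_sum_le_card_mul_sum_sq (s := Finset.range e)
        (f := fun p => ‖h p ω‖)
      simpa using this
    have h3 : ‖∑ p ∈ Finset.range e, h p ω‖ ^ 2
        ≤ (e : ℝ) * ∑ p ∈ Finset.range e, ‖h p ω‖ ^ 2 :=
      (pow_le_pow_left₀ (norm_nonneg _) h1 2).trans h2
    have h4 : ‖η‖ ^ 2 = η ^ 2 := by rw [Real.norm_eq_abs, sq_abs]
    rw [h4, mul_assoc]
    exact mul_le_mul_of_nonneg_left h3 (sq_nonneg η)
  -- integrate
  have hRHSint : Integrable
      (fun ω => η ^ 2 * (e : ℝ) * ∑ p ∈ Finset.range e, ‖h p ω‖ ^ 2) μ :=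
    (integrable_finset_sum _ fun p _ => hhsq_int p).const_mul _
  have hI : ∫ ω, ‖W 0 ω - W e ω‖ ^ 2 ∂μ
      ≤ ∫ ω, η ^ 2 * (e : ℝ) * ∑ p ∈ Finset.range e, ‖h p ω‖ ^ 2 ∂μ :=
    integral_mono_of_nonneg (ae_of_all _ fun ω => sq_nonneg _) hRHSint
      (ae_of_all _ hpt)
  have hI2 : ∫ ω, η ^ 2 * (e : ℝ) * ∑ p ∈ Finset.range e, ‖h p ω‖ ^ 2 ∂μ
      = η ^ 2 * (e : ℝ) * ∑ p ∈ Finset.range e, ∫ ω, ‖h p ω‖ ^ 2 ∂μ := by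
    rw [integral_const_mul, integral_finset_sum _ fun p _ => hhsq_int p]
  have hsum : ∑ p ∈ Finset.range e, ∫ ω, ‖h p ω‖ ^ 2 ∂μ
      ≤ ∑ p ∈ Finset.range e, ∫ ω, ‖g p ω‖ ^ 2 ∂μ + (e : ℝ) * σl ^ 2 := by
    calc ∑ p ∈ Finset.range e, ∫ ω, ‖h p ω‖ ^ 2 ∂μ
        ≤ ∑ p ∈ Finset.range e, (∫ ω, ‖g p ω‖ ^ 2 ∂μ + σl ^ 2) :=
          Finset.sum_le_sum fun p _ => hmoment p
      _ = ∑ p ∈ Finset.range e, ∫ ω, ‖g p ω‖ ^ 2 ∂μ + (e : ℝ) * σl ^ 2 := by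
          rw [Finset.sum_add_distrib, Finset.sum_const, Finset.card_range,
            nsmul_eq_mul]
  have hfinal : η ^ 2 * (e : ℝ) * ∑ p ∈ Finset.range e, ∫ ω, ‖h p ω‖ ^ 2 ∂μ
      ≤ η ^ 2 * (e : ℝ) * ∑ p ∈ Finset.range e, ∫ ω, ‖g p ω‖ ^ 2 ∂μ
        + η ^ 2 * (e : ℝ) ^ 2 * σl ^ 2 := by
    have hnn : (0 : ℝ) ≤ η ^ 2 * (e : ℝ) := by positivity
    have := mul_le_mul_of_nonneg_left hsum hnn
    nlinarith [this]
  calc ∫ ω, ‖W 0 ω - W e ω‖ ^ 2 ∂μ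
      ≤ η ^ 2 * (e : ℝ) * ∑ p ∈ Finset.range e, ∫ ω, ‖h p ω‖ ^ 2 ∂μ := by
        rw [← hI2]; exact hI
    _ ≤ η ^ 2 * (e : ℝ) * ∑ p ∈ Finset.range e, ∫ ω, ‖g p ω‖ ^ 2 ∂μ
        + η ^ 2 * (e : ℝ) ^ 2 * σl ^ 2 := hfinal
end
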